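/- With φⱼ = cⱼ/aⱼ ordered decreasingly as φ_{τ₁} ≥ … ≥ φ_{τ_R}, and radii defined by r₀ = 0, rᵢ = sqrt(φ_{τᵢ}⁻² ‖c_{τ_{i+1},…,τ_R}‖² + Σ_{m=1}^{i} a_{τ_m}²) for i = 1,…,R (with the convention that the c-tail is empty for i = R), the sequence (rᵢ) is nondecreasing: r_{i-1} ≤ rᵢ for all i = 1,…,R, and r_R = ‖a‖. -/

import Mathlib

/-- With `φⱼ = cⱼ/aⱼ` ordered decreasingly by the permutation `τ`
(0-based: `τ m` is the paper's `τ_{m+1}`), and radii `r₀ = 0`,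
`rᵢ = sqrt(φ_{τᵢ}⁻² ‖c_{τ_{i+1},…,τ_R}‖² + Σ_{m=1}^{i} a_{τ_m}²)` for
`i = 1,…,R`, the sequence `(rᵢ)` is nondecreasing and `r_R = ‖a‖`. -/
theorem stmt_2 (R : ℕ) (hR : 1 ≤ R) (a c : Fin R → ℝ)
    (ha : ∀ j, 0 < a j) (hc : ∀ j, 0 < c j) (τ : Equiv.Perm (Fin R))
    (hord : ∀ i j : Fin R, i ≤ j → c (τ j) / a (τ j) ≤ c (τ i) / a (τ i))
    (rseq : ℕ → ℝ)
    (hr0 : rseq 0 = 0)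
    (hri : ∀ i, 1 ≤ i → (hiR : i ≤ R) → rseq i =
      Real.sqrt ((c (τ ⟨i - 1, by omega⟩) / a (τ ⟨i - 1, by omega⟩))⁻¹ ^ 2 *
          (∑ m ∈ Finset.univ.filter (fun m : Fin R => i ≤ (m : ℕ)), (c (τ m)) ^ 2) +
        ∑ m ∈ Finset.univ.filter (fun m : Fin R => (m : ℕ) < i), (a (τ m)) ^ 2)) :
    (∀ i, 1 ≤ i → i ≤ R → rseq (i - 1) ≤ rseq i) ∧
      rseq R = Real.sqrt (∑ j, (a j) ^ 2) := by
  constructor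
  · intro i h1 hiR
    rcases eq_or_lt_of_le h1 with h | h2
    · rw [← h]
      simp only [Nat.sub_self, hr0, hri 1 le_rfl (h ▸ hiR)]
      exact Real.sqrt_nonneg _
    · have h2 : 2 ≤ i := h2
      rw [hri (i - 1) (by omega) (by omega), hri i h1 hiR]
      apply Real.sqrt_le_sqrt
      set q : Fin R := ⟨i - 1, by omega⟩ with hq
      set p : Fin R := ⟨i - 1 - 1, by omega⟩ with hp
      have F1 : Finset.univ.filter (fun m : Fin R => (m : ℕ) < i) =
          insert q (Finset.univ.filter (fun m : Fin R => (m : ℕ) < i - 1)) := by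
        ext m
        simp only [Finset.mem_filter, Finset.mem_insert, Finset.mem_univ, true_and,
          Fin.ext_iff, hq]
        omega
      have F2 : Finset.univ.filter (fun m : Fin R => i - 1 ≤ (m : ℕ)) =
          insert q (Finset.univ.filter (fun m : Fin R => i ≤ (m : ℕ))) := by
        ext m
        simp only [Finset.mem_filter, Finset.mem_insert, Finset.mem_univ, true_and,
          Fin.ext_iff, hq]
        omega
      have hq1 : q ∉ Finset.univ.filter (fun m : Fin R => (m : ℕ) < i - 1) := by
        simp [hq]
      have hq2 : q ∉ Finset.univ.filter (fun m : Fin R => i ≤ (m : ℕ)) := by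
        simp [hq]; omega
      rw [F1, F2, Finset.sum_insert hq1, Finset.sum_insert hq2]
      set Sc : ℝ := ∑ m ∈ Finset.univ.filter (fun m : Fin R => i ≤ (m : ℕ)), (c (τ m)) ^ 2
      have hSc : 0 ≤ Sc := Finset.sum_nonneg fun m _ => sq_nonneg _
      have hpq : c (τ q) / a (τ q) ≤ c (τ p) / a (τ p) := by
        apply hord
        simp only [Fin.le_def, hp, hq]
        omega
      have haq := ha (τ q)
      have hcq := hc (τ q)
      have hap := ha (τ p)
      have hcp := hc (τ p)
      have hqpos : 0 < c (τ q) / a (τ q) := div_pos hcq haq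
      have hppos : 0 < c (τ p) / a (τ p) := div_pos hcp hap
      have hinv : (c (τ p) / a (τ p))⁻¹ ≤ (c (τ q) / a (τ q))⁻¹ :=
        one_div_le_one_div_of_le hqpos hpq |>.trans_eq (one_div _) |>.trans_eq' (one_div _)
      have hinvq : (c (τ q) / a (τ q))⁻¹ = a (τ q) / c (τ q) := by
        rw [inv_div]
      have key : (c (τ q) / a (τ q))⁻¹ ^ 2 * (c (τ q)) ^ 2 = (a (τ q)) ^ 2 := by
        rw [hinvq]
        field_simp
      have hinvp_pos : 0 < (c (τ p) / a (τ p))⁻¹ := inv_pos.mpr hppos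
      nlinarith [mul_le_mul_of_nonneg_right (mul_self_le_mul_self hinvp_pos.le hinv) hSc,
        mul_le_mul_of_nonneg_right (mul_self_le_mul_self hinvp_pos.le hinv) (sq_nonneg (c (τ q))),
        sq_nonneg ((c (τ p) / a (τ p))⁻¹)]
  · rw [hri R hR le_rfl]
    have F0 : Finset.univ.filter (fun m : Fin R => R ≤ (m : ℕ)) = ∅ := by
      ext m
      simp only [Finset.mem_filter, Finset.mem_univ, true_and, Finset.notMem_empty, iff_false]
      omega
    have F3 : Finset.univ.filter (fun m : Fin R => (m : ℕ) < R) = Finset.univ := by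
      ext m; simp [m.isLt]
    rw [F0, F3, Finset.sum_empty, mul_zero, zero_add]
    exact congrArg Real.sqrt (Equiv.sum_comp τ fun j => (a j) ^ 2)
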